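/- Variance decomposition for AIPW estimating functions under missing at random: Let (Ω, 𝓐, P) be a probability space, X : Ω → 𝒳 and Y : Ω → 𝒴 random variables into measurable spaces, R : Ω → {0,1}, and π₀ : 𝒳 → ℝ measurable with π₀(X) > 0 almost surely and E[R | σ(X,Y)] = π₀(X) almost surely. Let φ : 𝒴 → ℝ and m : 𝒳 → ℝ be measurable, let m₀ be a measurable function with m₀(X) a version of E[φ(Y) | σ(X)], and set δ(X) := m(X) − m₀(X). Assume that m(X) + (R/π₀(X))·(φ(Y) − m(X)), m₀(X) + (R/π₀(X))·(φ(Y) − m₀(X)), and ((1−π₀(X))/π₀(X))^{1/2}·δ(X) are all square-integrable. Then Var[ m(X) + (R/π₀(X))·(φ(Y) − m(X)) ] = Var[ m₀(X) + (R/π₀(X))·(φ(Y) − m₀(X)) ] + E[ ((1 − π₀(X))/π₀(X))·δ(X)² ]. -/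

import Mathlib

open MeasureTheory ProbabilityTheory ENNReal

namespace AIPWAux

lemma integrable_mul_of_memL2 {Ω : Type*} [m0 : MeasurableSpace Ω] {P : Measure Ω}
    [IsProbabilityMeasure P] {f g : Ω → ℝ} (hf : MemLp f 2 P) (hg : MemLp g 2 P) :
    Integrable (fun ω => f ω * g ω) P := by
  have h : MemLp (g • f) 1 P := hf.smul hg
  have := h.integrable le_rfl
  simp [smul_eq_mul, mul_comm] at this
  exact this

lemma integral_mul_eq_zero {Ω : Type*} {m : MeasurableSpace Ω} [m0 : MeasurableSpace Ω]
    {P : Measure Ω} [IsProbabilityMeasure P] (hm : m ≤ m0) {G ρ : Ω → ℝ}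
    (hG : StronglyMeasurable[m] G) (hρ : Integrable ρ P)
    (hce : P[ρ|m] =ᵐ[P] 0) (hint : Integrable (fun ω => G ω * ρ ω) P) :
    ∫ ω, G ω * ρ ω ∂P = 0 := by
  haveI : IsFiniteMeasure (P.trim hm) := isFiniteMeasure_trim hm
  have h1 : P[G * ρ|m] =ᵐ[P] G * P[ρ|m] :=
    condExp_mul_of_stronglyMeasurable_left hG (by simpa [Pi.mul_def] using hint) hρ
  have h2 : P[G * ρ|m] =ᵐ[P] (0 : Ω → ℝ) := by
    refine h1.trans ?_
    filter_upwards [hce] with ω hω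
    simp [Pi.mul_apply, hω]
  have h3 : ∫ ω, G ω * ρ ω ∂P = ∫ ω, (P[G * ρ|m]) ω ∂P := by
    rw [integral_condExp hm]
    rfl
  rw [h3, integral_congr_ae h2]; simp

lemma lintegral_transfer {Ω : Type*} {m : MeasurableSpace Ω} [m0 : MeasurableSpace Ω]
    {P : Measure Ω} [IsProbabilityMeasure P] (hm : m ≤ m0) {ρ ρ' : Ω → ℝ}
    (hρi : Integrable ρ P) (hρm : Measurable ρ) (hρ'm : Measurable ρ')
    (hρnn : 0 ≤ᵐ[P] ρ) (hρ'nn : 0 ≤ᵐ[P] ρ')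
    (hce : P[ρ|m] =ᵐ[P] ρ') {f : Ω → ℝ≥0∞} (hf : Measurable[m] f) :
    ∫⁻ ω, ENNReal.ofReal (ρ ω) * f ω ∂P = ∫⁻ ω, ENNReal.ofReal (ρ' ω) * f ω ∂P := by
  haveI : IsFiniteMeasure (P.trim hm) := isFiniteMeasure_trim hm
  have hρ'i : Integrable ρ' P := integrable_condExp.congr hce
  have hg₁m : Measurable fun ω => ENNReal.ofReal (ρ ω) := hρm.ennreal_ofReal
  have hg₂m : Measurable fun ω => ENNReal.ofReal (ρ' ω) := hρ'm.ennreal_ofReal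
  have hsets : ∀ s, MeasurableSet[m] s →
      P.withDensity (fun ω => ENNReal.ofReal (ρ ω)) s
        = P.withDensity (fun ω => ENNReal.ofReal (ρ' ω)) s := by
    intro s hs
    have hsm : MeasurableSet s := hm s hs
    rw [withDensity_apply _ hsm, withDensity_apply _ hsm,
      ← ofReal_integral_eq_lintegral_ofReal hρi.restrict (ae_restrict_of_ae hρnn),
      ← ofReal_integral_eq_lintegral_ofReal hρ'i.restrict (ae_restrict_of_ae hρ'nn)]
    congr 1
    rw [← setIntegral_condExp hm hρi hs]
    exact integral_congr_ae (ae_restrict_of_ae hce)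
  have htrim : (P.withDensity (fun ω => ENNReal.ofReal (ρ ω))).trim hm
      = (P.withDensity (fun ω => ENNReal.ofReal (ρ' ω))).trim hm := by
    refine @Measure.ext Ω m _ _ (fun s hs => ?_)
    rw [trim_measurableSet_eq hm hs, trim_measurableSet_eq hm hs]
    exact hsets s hs
  have hfm0 : Measurable f := hf.mono hm le_rfl
  calc ∫⁻ ω, ENNReal.ofReal (ρ ω) * f ω ∂P
      = ∫⁻ ω, f ω ∂(P.withDensity (fun ω => ENNReal.ofReal (ρ ω))) :=
        (lintegral_withDensity_eq_lintegral_mul P hg₁m hfm0).symm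
    _ = ∫⁻ ω, f ω ∂((P.withDensity (fun ω => ENNReal.ofReal (ρ ω))).trim hm) :=
        (lintegral_trim hm hf).symm
    _ = ∫⁻ ω, f ω ∂((P.withDensity (fun ω => ENNReal.ofReal (ρ' ω))).trim hm) := by rw [htrim]
    _ = ∫⁻ ω, f ω ∂(P.withDensity (fun ω => ENNReal.ofReal (ρ' ω))) := lintegral_trim hm hf
    _ = ∫⁻ ω, ENNReal.ofReal (ρ' ω) * f ω ∂P :=
        lintegral_withDensity_eq_lintegral_mul P hg₂m hfm0

end AIPWAux

set_option maxHeartbeats 1000000 in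
/-- Variance decomposition for AIPW estimating functions under missing at
random: with `m₀(X)` a version of `E[φ(Y) | σ(X)]` and `δ = m − m₀`,
`Var[m(X) + (R/π₀(X))·(φ(Y) − m(X))]
  = Var[m₀(X) + (R/π₀(X))·(φ(Y) − m₀(X))]
    + E[((1 − π₀(X))/π₀(X))·δ(X)²]`. -/
theorem aipw_variance_decomposition_mar
    {Ω 𝒳 𝒴 : Type*} [MeasurableSpace Ω] [MeasurableSpace 𝒳] [MeasurableSpace 𝒴]
    (P : Measure Ω) [IsProbabilityMeasure P]
    (X : Ω → 𝒳) (Y : Ω → 𝒴) (R : Ω → ℝ)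
    (hX : Measurable X) (hY : Measurable Y) (hR : Measurable R)
    (hR01 : ∀ ω, R ω = 0 ∨ R ω = 1)
    (π₀ : 𝒳 → ℝ) (hπ : Measurable π₀)
    (hπpos : ∀ᵐ ω ∂P, 0 < π₀ (X ω))
    (hMAR : P[R | MeasurableSpace.comap (fun ω => (X ω, Y ω)) inferInstance]
      =ᵐ[P] fun ω => π₀ (X ω))
    (φ : 𝒴 → ℝ) (m m₀ : 𝒳 → ℝ)
    (hφ : Measurable φ) (hm : Measurable m) (hm₀ : Measurable m₀)
    (hm₀ver : (fun ω => m₀ (X ω))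
      =ᵐ[P] P[(fun ω => φ (Y ω)) | MeasurableSpace.comap X inferInstance])
    (hL2m : MemLp (fun ω => m (X ω) + R ω / π₀ (X ω) * (φ (Y ω) - m (X ω))) 2 P)
    (hL2m₀ : MemLp (fun ω => m₀ (X ω) + R ω / π₀ (X ω) * (φ (Y ω) - m₀ (X ω))) 2 P)
    (hL2δ : MemLp (fun ω =>
      Real.sqrt ((1 - π₀ (X ω)) / π₀ (X ω)) * (m (X ω) - m₀ (X ω))) 2 P) :
    variance (fun ω => m (X ω) + R ω / π₀ (X ω) * (φ (Y ω) - m (X ω))) P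
      = variance (fun ω => m₀ (X ω) + R ω / π₀ (X ω) * (φ (Y ω) - m₀ (X ω))) P
        + ∫ ω, ((1 - π₀ (X ω)) / π₀ (X ω)) * (m (X ω) - m₀ (X ω)) ^ 2 ∂P := by
  classical
  -- basic measurability facts
  have hXY : Measurable fun ω => (X ω, Y ω) := hX.prodMk hY
  have hmXY_le : MeasurableSpace.comap (fun ω => (X ω, Y ω)) inferInstance
      ≤ (inferInstance : MeasurableSpace Ω) := hXY.comap_le
  have hmX_le : MeasurableSpace.comap X inferInstance
      ≤ (inferInstance : MeasurableSpace Ω) := hX.comap_le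
  have hbXY : Measurable[MeasurableSpace.comap (fun ω => (X ω, Y ω)) inferInstance]
      fun ω => (X ω, Y ω) := Measurable.of_comap_le le_rfl
  have hbX : Measurable[MeasurableSpace.comap X inferInstance] X :=
    Measurable.of_comap_le le_rfl
  haveI hfin1 : IsFiniteMeasure (P.trim hmXY_le) := isFiniteMeasure_trim _
  haveI hfin2 : IsFiniteMeasure (P.trim hmX_le) := isFiniteMeasure_trim _
  -- the main functions
  set A : Ω → ℝ := fun ω => m₀ (X ω) + R ω / π₀ (X ω) * (φ (Y ω) - m₀ (X ω)) with hA_def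
  set B : Ω → ℝ := fun ω => m (X ω) + R ω / π₀ (X ω) * (φ (Y ω) - m (X ω)) with hB_def
  set S : Ω → ℝ := fun ω =>
    Real.sqrt ((1 - π₀ (X ω)) / π₀ (X ω)) * (m (X ω) - m₀ (X ω)) with hS_def
  set D : Ω → ℝ := fun ω => B ω - A ω with hD_def
  set W : Ω → ℝ := fun ω =>
    Real.sqrt ((1 - π₀ (X ω)) / π₀ (X ω)) * (φ (Y ω) - m₀ (X ω)) with hW_def
  set U : Ω → ℝ := fun ω => m₀ (X ω) + (φ (Y ω) - m₀ (X ω)) / π₀ (X ω) with hU_def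
  set K : Ω → ℝ := fun ω => (m (X ω) - m₀ (X ω)) *
      ((1 - 1/π₀ (X ω)) * (2*φ (Y ω) - m (X ω) - m₀ (X ω))
        - (m (X ω) + m₀ (X ω))) / π₀ (X ω) with hK_def
  set H : Ω → ℝ := fun ω =>
    (-2) * ((1 - π₀ (X ω)) / π₀ (X ω)) * (m (X ω) - m₀ (X ω)) with hH_def
  set ρ₀ : Ω → ℝ := fun ω => R ω - π₀ (X ω) with hρ₀_def
  -- integrability of the basic objects
  have hRint : Integrable R P := by
    refine Integrable.mono' (integrable_const 1) hR.aestronglyMeasurable ?_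
    filter_upwards with ω
    rcases hR01 ω with h | h <;> simp [h]
  have hπXint : Integrable (fun ω => π₀ (X ω)) P := integrable_condExp.congr hMAR
  have hm₀Xint : Integrable (fun ω => m₀ (X ω)) P := integrable_condExp.congr hm₀ver.symm
  have hRnn : 0 ≤ᵐ[P] R := Filter.Eventually.of_forall fun ω => by
    rcases hR01 ω with h | h <;> simp [h]
  have hπnn : 0 ≤ᵐ[P] fun ω => π₀ (X ω) := hπpos.mono fun ω h => h.le
  -- π₀(X) ≤ 1 a.e.
  have hπle1 : ∀ᵐ ω ∂P, π₀ (X ω) ≤ 1 := by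
    have hRle1 : R ≤ᵐ[P] fun _ => (1:ℝ) := Filter.Eventually.of_forall fun ω => by
      rcases hR01 ω with h | h <;> simp [h]
    have h1 := condExp_mono (μ := P)
      (m := MeasurableSpace.comap (fun ω => (X ω, Y ω)) inferInstance)
      hRint (integrable_const (1:ℝ)) hRle1
    have h2 := condExp_const hmXY_le (1:ℝ) (μ := P)
    filter_upwards [hMAR, h1] with ω e1 e2
    rw [← e1]
    exact e2.trans (le_of_eq (congrFun h2 ω))
  have hL2D : MemLp D 2 P := hL2m.sub hL2m₀
  have hAi : Integrable A P := hL2m₀.integrable one_le_two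
  have hBi : Integrable B P := hL2m.integrable one_le_two
  have hDi : Integrable D P := hL2D.integrable one_le_two
  have hA2 : Integrable (fun ω => A ω ^ 2) P := hL2m₀.integrable_sq
  have hB2 : Integrable (fun ω => B ω ^ 2) P := hL2m.integrable_sq
  have hρ₀int : Integrable ρ₀ P := hRint.sub hπXint
  -- pointwise identities from R ∈ {0,1}
  have hRU : ∀ ω, R ω * U ω ^ 2 = R ω * A ω ^ 2 := by
    intro ω
    rcases hR01 ω with h | h <;> simp only [hU_def, hA_def] <;> rw [h] <;> ring
  have h1RA : ∀ ω, (1 - R ω) * m₀ (X ω) ^ 2 = (1 - R ω) * A ω ^ 2 := by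
    intro ω
    rcases hR01 ω with h | h <;> simp only [hA_def] <;> rw [h] <;> ring
  -- measurability on the product space
  have hUmXY : Measurable[MeasurableSpace.comap (fun ω => (X ω, Y ω)) inferInstance] U := by
    have hk : Measurable fun q : 𝒳 × 𝒴 => m₀ q.1 + (φ q.2 - m₀ q.1) / π₀ q.1 :=
      (hm₀.comp measurable_fst).add
        (((hφ.comp measurable_snd).sub (hm₀.comp measurable_fst)).div (hπ.comp measurable_fst))
    exact hk.comp hbXY
  have hm₀XmXY : Measurable[MeasurableSpace.comap (fun ω => (X ω, Y ω)) inferInstance]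
      fun ω => m₀ (X ω) := (hm₀.comp measurable_fst).comp hbXY
  have hUm : Measurable U :=
    (hm₀.comp hX).add (((hφ.comp hY).sub (hm₀.comp hX)).div (hπ.comp hX))
  -- the conditional expectation of (1 - R) is (1 - π₀(X))
  have hceR' : P[(fun ω => 1 - R ω) |
      MeasurableSpace.comap (fun ω => (X ω, Y ω)) inferInstance]
      =ᵐ[P] fun ω => 1 - π₀ (X ω) := by
    have h := condExp_sub (μ := P)
      (m := MeasurableSpace.comap (fun ω => (X ω, Y ω)) inferInstance)
      (f := fun _ : Ω => (1:ℝ)) (g := R) (integrable_const 1) hRint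
    have h2 := condExp_const hmXY_le (1:ℝ) (μ := P)
    filter_upwards [h, hMAR] with ω e1 e2
    have : ((fun _ : Ω => (1:ℝ)) - R) = fun ω => 1 - R ω := rfl
    rw [← this, e1, Pi.sub_apply, congrFun h2 ω, e2]
  -- lintegral of A² is finite
  have hA2fin : ∫⁻ ω, ENNReal.ofReal (A ω ^ 2) ∂P < ⊤ := by
    have h := hA2.2
    rwa [hasFiniteIntegral_iff_ofReal
      (Filter.Eventually.of_forall fun ω => sq_nonneg _)] at h
  -- transfer: ∫ π₀(X) U² is finite
  have hπU2fin : ∫⁻ ω, ENNReal.ofReal (π₀ (X ω) * U ω ^ 2) ∂P < ⊤ := by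
    have h0 := AIPWAux.lintegral_transfer hmXY_le hRint hR (hπ.comp hX)
      hRnn hπnn hMAR ((hUmXY.pow_const 2).ennreal_ofReal)
    calc ∫⁻ ω, ENNReal.ofReal (π₀ (X ω) * U ω ^ 2) ∂P
        = ∫⁻ ω, ENNReal.ofReal (π₀ (X ω)) * ENNReal.ofReal (U ω ^ 2) ∂P := by
          refine lintegral_congr_ae ?_
          filter_upwards [hπpos] with ω h
          rw [ENNReal.ofReal_mul h.le]
      _ = ∫⁻ ω, ENNReal.ofReal (R ω) * ENNReal.ofReal (U ω ^ 2) ∂P := h0.symm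
      _ = ∫⁻ ω, ENNReal.ofReal (R ω * A ω ^ 2) ∂P := by
          refine lintegral_congr fun ω => ?_
          rw [← ENNReal.ofReal_mul (by rcases hR01 ω with h | h <;> simp [h]), hRU ω]
      _ ≤ ∫⁻ ω, ENNReal.ofReal (A ω ^ 2) ∂P := by
          refine lintegral_mono fun ω => ENNReal.ofReal_le_ofReal ?_
          rcases hR01 ω with h | h <;> rw [h] <;> nlinarith [sq_nonneg (A ω)]
      _ < ⊤ := hA2fin
  have hπU2int : Integrable (fun ω => π₀ (X ω) * U ω ^ 2) P := by
    refine ⟨((hπ.comp hX).mul (hUm.pow_const 2)).aestronglyMeasurable, ?_⟩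
    rw [hasFiniteIntegral_iff_ofReal ?_]
    · exact hπU2fin
    · filter_upwards [hπpos] with ω h
      exact mul_nonneg h.le (sq_nonneg _)
  -- transfer: ∫ (1-π₀(X)) m₀(X)² is finite
  have h1πm₀fin : ∫⁻ ω, ENNReal.ofReal ((1 - π₀ (X ω)) * m₀ (X ω) ^ 2) ∂P < ⊤ := by
    have h0 := AIPWAux.lintegral_transfer hmXY_le ((integrable_const 1).sub hRint)
      (measurable_const.sub hR) (measurable_const.sub (hπ.comp hX))
      (Filter.Eventually.of_forall fun ω => by rcases hR01 ω with h | h <;> simp [h])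
      (hπle1.mono fun ω h => by simpa using sub_nonneg.mpr h)
      hceR' ((hm₀XmXY.pow_const 2).ennreal_ofReal)
    calc ∫⁻ ω, ENNReal.ofReal ((1 - π₀ (X ω)) * m₀ (X ω) ^ 2) ∂P
        = ∫⁻ ω, ENNReal.ofReal (1 - π₀ (X ω)) * ENNReal.ofReal (m₀ (X ω) ^ 2) ∂P := by
          refine lintegral_congr_ae ?_
          filter_upwards [hπle1] with ω h
          rw [ENNReal.ofReal_mul (by linarith)]
      _ = ∫⁻ ω, ENNReal.ofReal (1 - R ω) * ENNReal.ofReal (m₀ (X ω) ^ 2) ∂P := h0.symm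
      _ = ∫⁻ ω, ENNReal.ofReal ((1 - R ω) * A ω ^ 2) ∂P := by
          refine lintegral_congr fun ω => ?_
          rw [← ENNReal.ofReal_mul (by rcases hR01 ω with h | h <;> simp [h]), h1RA ω]
      _ ≤ ∫⁻ ω, ENNReal.ofReal (A ω ^ 2) ∂P := by
          refine lintegral_mono fun ω => ENNReal.ofReal_le_ofReal ?_
          rcases hR01 ω with h | h <;> rw [h] <;> nlinarith [sq_nonneg (A ω)]
      _ < ⊤ := hA2fin
  have h1πm₀int : Integrable (fun ω => (1 - π₀ (X ω)) * m₀ (X ω) ^ 2) P := by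
    refine ⟨((measurable_const.sub (hπ.comp hX)).mul ((hm₀.comp hX).pow_const 2)).aestronglyMeasurable, ?_⟩
    rw [hasFiniteIntegral_iff_ofReal ?_]
    · exact h1πm₀fin
    · filter_upwards [hπle1] with ω h
      exact mul_nonneg (by linarith) (sq_nonneg _)
  -- φ(Y) is integrable
  have hφYint : Integrable (fun ω => φ (Y ω)) P := by
    refine Integrable.mono'
      (((hπU2int.div_const 2).add (integrable_const (1/2 : ℝ))).add
        (hm₀Xint.abs.const_mul 2))
      (hφ.comp hY).aestronglyMeasurable ?_
    filter_upwards [hπpos, hπle1] with ω h1 h2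
    have hπ0 : π₀ (X ω) ≠ 0 := ne_of_gt h1
    have hU : φ (Y ω) = m₀ (X ω) + π₀ (X ω) * (U ω - m₀ (X ω)) := by
      simp only [hU_def]
      field_simp
      ring
    simp only [Pi.add_apply]
    obtain ⟨u, hu⟩ : ∃ u, u = U ω := ⟨_, rfl⟩
    rw [← hu] at hU ⊢
    rw [Real.norm_eq_abs, abs_le]
    constructor
    · rw [hU]
      nlinarith [mul_nonneg h1.le (sq_nonneg (u + 1)), le_abs_self (m₀ (X ω)),
        neg_abs_le (m₀ (X ω)), abs_nonneg (m₀ (X ω)),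
        mul_le_mul_of_nonneg_left (neg_abs_le (m₀ (X ω))) h1.le,
        mul_le_mul_of_nonneg_left (le_abs_self (m₀ (X ω))) h1.le,
        mul_le_mul_of_nonneg_right h2 (abs_nonneg (m₀ (X ω)))]
    · rw [hU]
      nlinarith [mul_nonneg h1.le (sq_nonneg (u - 1)), le_abs_self (m₀ (X ω)),
        neg_abs_le (m₀ (X ω)), abs_nonneg (m₀ (X ω)),
        mul_le_mul_of_nonneg_left (neg_abs_le (m₀ (X ω))) h1.le,
        mul_le_mul_of_nonneg_left (le_abs_self (m₀ (X ω))) h1.le,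
        mul_le_mul_of_nonneg_right h2 (abs_nonneg (m₀ (X ω)))]
  -- W is in L²
  have hWm : Measurable W :=
    ((measurable_const.sub (hπ.comp hX)).div (hπ.comp hX)).sqrt.mul
      ((hφ.comp hY).sub (hm₀.comp hX))
  have hW2int : Integrable (fun ω => W ω ^ 2) P := by
    refine Integrable.mono' ((hπU2int.const_mul 2).add (h1πm₀int.const_mul 2))
      (hWm.pow_const 2).aestronglyMeasurable ?_
    filter_upwards [hπpos, hπle1] with ω h1 h2
    have hπ0 : π₀ (X ω) ≠ 0 := ne_of_gt h1
    have hnn : 0 ≤ (1 - π₀ (X ω)) / π₀ (X ω) := div_nonneg (by linarith) h1.le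
    have hφm : φ (Y ω) - m₀ (X ω) = π₀ (X ω) * (U ω - m₀ (X ω)) := by
      simp only [hU_def]
      field_simp
      ring
    have E : W ω ^ 2 = (1 - π₀ (X ω)) * π₀ (X ω) * (U ω - m₀ (X ω)) ^ 2 := by
      simp only [hW_def]
      rw [mul_pow, Real.sq_sqrt hnn, hφm]
      field_simp
    simp only [Pi.add_apply]
    rw [Real.norm_eq_abs, abs_of_nonneg (sq_nonneg _), E]
    nlinarith [mul_nonneg (mul_nonneg h1.le (sub_nonneg.2 h2)) (sq_nonneg (U ω + m₀ (X ω))),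
      mul_nonneg (mul_nonneg h1.le (sub_nonneg.2 h2)) (sq_nonneg (U ω - m₀ (X ω))),
      mul_nonneg h1.le (sq_nonneg (U ω)), mul_nonneg (sub_nonneg.2 h2) (sq_nonneg (m₀ (X ω))),
      mul_nonneg (mul_nonneg h1.le h1.le) (sq_nonneg (U ω)),
      mul_nonneg (mul_nonneg (sub_nonneg.2 h2) (sub_nonneg.2 h2)) (sq_nonneg (m₀ (X ω)))]
  have hW2 : MemLp W 2 P := (memLp_two_iff_integrable_sq hWm.aestronglyMeasurable).mpr hW2int
  -- conditional expectation facts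
  have hπXce : P[(fun ω => π₀ (X ω)) |
      MeasurableSpace.comap (fun ω => (X ω, Y ω)) inferInstance] = fun ω => π₀ (X ω) :=
    condExp_of_stronglyMeasurable hmXY_le
      (((hπ.comp measurable_fst).comp hbXY).stronglyMeasurable) hπXint
  have hceρ₀ : P[ρ₀ | MeasurableSpace.comap (fun ω => (X ω, Y ω)) inferInstance]
      =ᵐ[P] 0 := by
    have h := condExp_sub (μ := P)
      (m := MeasurableSpace.comap (fun ω => (X ω, Y ω)) inferInstance)
      (f := R) (g := fun ω => π₀ (X ω)) hRint hπXint
    have e : ρ₀ = R - fun ω => π₀ (X ω) := rfl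
    rw [e]
    refine h.trans ?_
    filter_upwards [hMAR] with ω e2
    simp only [Pi.sub_apply, Pi.zero_apply, hπXce, e2, sub_self]
  have hm₀Xce : P[(fun ω => m₀ (X ω)) | MeasurableSpace.comap X inferInstance]
      = fun ω => m₀ (X ω) :=
    condExp_of_stronglyMeasurable hmX_le ((hm₀.comp hbX).stronglyMeasurable) hm₀Xint
  have hceφ : P[(fun ω => φ (Y ω) - m₀ (X ω)) | MeasurableSpace.comap X inferInstance]
      =ᵐ[P] 0 := by
    have h := condExp_sub (μ := P) (m := MeasurableSpace.comap X inferInstance)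
      (f := fun ω => φ (Y ω)) (g := fun ω => m₀ (X ω)) hφYint hm₀Xint
    have e : (fun ω => φ (Y ω) - m₀ (X ω))
        = (fun ω => φ (Y ω)) - fun ω => m₀ (X ω) := rfl
    rw [e]
    refine h.trans ?_
    filter_upwards [hm₀ver] with ω e2
    simp only [Pi.sub_apply, Pi.zero_apply, hm₀Xce, ← e2, sub_self]
  -- ∫ D = 0
  have hDzero : ∫ ω, D ω ∂P = 0 := by
    have hGsm : StronglyMeasurable[MeasurableSpace.comap (fun ω => (X ω, Y ω)) inferInstance]
        fun ω => (m₀ (X ω) - m (X ω)) / π₀ (X ω) :=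
      (((((hm₀.comp measurable_fst).sub (hm.comp measurable_fst)).div
        (hπ.comp measurable_fst)).comp hbXY)).stronglyMeasurable
    have hae : (fun ω => ((m₀ (X ω) - m (X ω)) / π₀ (X ω)) * ρ₀ ω) =ᵐ[P] D := by
      filter_upwards [hπpos] with ω h1
      have hπ0 : π₀ (X ω) ≠ 0 := ne_of_gt h1
      simp only [hρ₀_def, hD_def, hB_def, hA_def]
      field_simp
      ring
    rw [← integral_congr_ae hae]
    exact AIPWAux.integral_mul_eq_zero hmXY_le hGsm hρ₀int hceρ₀ (hDi.congr hae.symm)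
  -- the main pointwise decomposition
  have hsplit : (fun ω => D ω * (A ω + B ω)) =ᵐ[P] fun ω =>
      K ω * ρ₀ ω + (H ω * (φ (Y ω) - m₀ (X ω))
        + ((1 - π₀ (X ω)) / π₀ (X ω)) * (m (X ω) - m₀ (X ω)) ^ 2) := by
    filter_upwards [hπpos] with ω h1
    have hπ0 : π₀ (X ω) ≠ 0 := ne_of_gt h1
    simp only [hD_def, hB_def, hA_def, hK_def, hH_def, hρ₀_def]
    rcases hR01 ω with h | h <;> rw [h] <;>
      generalize hgen : π₀ (X ω) = p at hπ0 ⊢ <;>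
      generalize m (X ω) = q1 <;> generalize m₀ (X ω) = q2 <;>
      generalize φ (Y ω) = q3 <;> field_simp <;> ring
  have hSWint : Integrable (fun ω => S ω * W ω) P :=
    AIPWAux.integrable_mul_of_memL2 hL2δ hW2
  have hT1rel : (fun ω => H ω * (φ (Y ω) - m₀ (X ω))) =ᵐ[P]
      fun ω => (-2) * (S ω * W ω) := by
    filter_upwards [hπpos, hπle1] with ω h1 h2
    have hnn : 0 ≤ (1 - π₀ (X ω)) / π₀ (X ω) := div_nonneg (by linarith) h1.le
    have h3 := Real.mul_self_sqrt hnn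
    simp only [hH_def, hS_def, hW_def]
    linear_combination (2 * (m (X ω) - m₀ (X ω)) * (φ (Y ω) - m₀ (X ω))) * h3
  have hT1int : Integrable (fun ω => H ω * (φ (Y ω) - m₀ (X ω))) P :=
    (hSWint.const_mul (-2)).congr hT1rel.symm
  have hT2rel : (fun ω => ((1 - π₀ (X ω)) / π₀ (X ω)) * (m (X ω) - m₀ (X ω)) ^ 2)
      =ᵐ[P] fun ω => S ω ^ 2 := by
    filter_upwards [hπpos, hπle1] with ω h1 h2
    have hnn : 0 ≤ (1 - π₀ (X ω)) / π₀ (X ω) := div_nonneg (by linarith) h1.le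
    simp only [hS_def]
    rw [mul_pow, Real.sq_sqrt hnn]
  have hT2int : Integrable
      (fun ω => ((1 - π₀ (X ω)) / π₀ (X ω)) * (m (X ω) - m₀ (X ω)) ^ 2) P :=
    hL2δ.integrable_sq.congr hT2rel.symm
  have hDABint : Integrable (fun ω => D ω * (A ω + B ω)) P :=
    AIPWAux.integrable_mul_of_memL2 hL2D (hL2m₀.add hL2m)
  have hKρint : Integrable (fun ω => K ω * ρ₀ ω) P := by
    refine (hDABint.sub (hT1int.add hT2int)).congr ?_
    filter_upwards [hsplit] with ω h
    simp only [Pi.sub_apply, Pi.add_apply]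
    linarith [h]
  have hKsm : StronglyMeasurable[MeasurableSpace.comap (fun ω => (X ω, Y ω)) inferInstance]
      K := by
    have hk : Measurable fun q : 𝒳 × 𝒴 =>
        (m q.1 - m₀ q.1) * ((1 - 1/π₀ q.1) * (2*φ q.2 - m q.1 - m₀ q.1)
          - (m q.1 + m₀ q.1)) / π₀ q.1 := by
      apply Measurable.div _ (hπ.comp measurable_fst)
      apply Measurable.mul ((hm.comp measurable_fst).sub (hm₀.comp measurable_fst))
      exact (((measurable_const.sub ((measurable_const.div (hπ.comp measurable_fst)))).mul
        (((measurable_const.mul (hφ.comp measurable_snd)).sub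
          (hm.comp measurable_fst)).sub (hm₀.comp measurable_fst))).sub
        ((hm.comp measurable_fst).add (hm₀.comp measurable_fst)))
    exact (hk.comp hbXY).stronglyMeasurable
  have hKzero : ∫ ω, K ω * ρ₀ ω ∂P = 0 :=
    AIPWAux.integral_mul_eq_zero hmXY_le hKsm hρ₀int hceρ₀ hKρint
  have hHsm : StronglyMeasurable[MeasurableSpace.comap X inferInstance] H := by
    have hk : Measurable fun x : 𝒳 => (-2 : ℝ) * ((1 - π₀ x) / π₀ x) * (m x - m₀ x) :=
      (measurable_const.mul ((measurable_const.sub hπ).div hπ)).mul (hm.sub hm₀)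
    exact (hk.comp hbX).stronglyMeasurable
  have hT1zero : ∫ ω, H ω * (φ (Y ω) - m₀ (X ω)) ∂P = 0 :=
    AIPWAux.integral_mul_eq_zero hmX_le hHsm (hφYint.sub hm₀Xint) hceφ hT1int
  -- putting the integrals together
  have hintDAB : ∫ ω, D ω * (A ω + B ω) ∂P
      = ∫ ω, ((1 - π₀ (X ω)) / π₀ (X ω)) * (m (X ω) - m₀ (X ω)) ^ 2 ∂P := by
    have hI1 : ∫ ω, (H ω * (φ (Y ω) - m₀ (X ω))
          + ((1 - π₀ (X ω)) / π₀ (X ω)) * (m (X ω) - m₀ (X ω)) ^ 2) ∂P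
        = (∫ ω, H ω * (φ (Y ω) - m₀ (X ω)) ∂P)
          + ∫ ω, ((1 - π₀ (X ω)) / π₀ (X ω)) * (m (X ω) - m₀ (X ω)) ^ 2 ∂P :=
      integral_add hT1int hT2int
    have hI2 : ∫ ω, (K ω * ρ₀ ω + (H ω * (φ (Y ω) - m₀ (X ω))
          + ((1 - π₀ (X ω)) / π₀ (X ω)) * (m (X ω) - m₀ (X ω)) ^ 2)) ∂P
        = (∫ ω, K ω * ρ₀ ω ∂P) + ∫ ω, (H ω * (φ (Y ω) - m₀ (X ω))
          + ((1 - π₀ (X ω)) / π₀ (X ω)) * (m (X ω) - m₀ (X ω)) ^ 2) ∂P :=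
      integral_add hKρint (hT1int.add hT2int)
    rw [integral_congr_ae hsplit, hI2, hI1, hKzero, hT1zero]
    ring
  have hEBA : ∫ ω, B ω ∂P = ∫ ω, A ω ∂P := by
    have h := integral_sub hBi hAi
    have h0 : ∫ ω, (B ω - A ω) ∂P = 0 := by
      have e : (fun ω => B ω - A ω) = D := hD_def.symm
      rw [e]
      exact hDzero
    rw [h0] at h
    linarith [h]
  have hdiff2 : ∫ ω, B ω ^ 2 ∂P - ∫ ω, A ω ^ 2 ∂P = ∫ ω, D ω * (A ω + B ω) ∂P := by
    rw [← integral_sub hB2 hA2]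
    refine integral_congr_ae (Filter.Eventually.of_forall fun ω => ?_)
    simp only [hD_def]
    ring
  have hVB : variance B P = (∫ ω, B ω ^ 2 ∂P) - (∫ ω, B ω ∂P) ^ 2 := by
    rw [variance_eq_sub hL2m]
    rfl
  have hVA : variance A P = (∫ ω, A ω ^ 2 ∂P) - (∫ ω, A ω ∂P) ^ 2 := by
    rw [variance_eq_sub hL2m₀]
    rfl
  rw [hVB, hVA, hEBA]
  linarith [hdiff2, hintDAB]
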